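/- Let L : (0,∞) → (0,∞) be continuous with controled variation, i.e. for every compact subset 𝒦 of (0,∞), inf{ L(λs)/L(λ) : λ > 0, s ∈ 𝒦 } > 0, and let p > 1. Then there exist a₀ > 0, q > 1 and c > 0 (with q and c independent of a) such that for every a ∈ (0, a₀], the function f(s) = s^p L(s)^a satisfies f(sλ) ≥ c s^q f(λ) for all s ≥ 1 and all λ > 0. -/

import Mathlib

set_option maxHeartbeats 800000


open Set Filter

/-- for `L` with controled variation and `p > 1`, the functions
`f(s) = s^p L(s)^a` satisfy `f(sλ) ≥ c s^q f(λ)` (for `s ≥ 1`, `λ > 0`) with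
`q > 1`, `c > 0` independent of `a ∈ (0, a₀]`. -/
theorem stmt_10 (L : ℝ → ℝ)
    (hL_cont : ContinuousOn L (Ioi 0)) (hL_pos : ∀ s : ℝ, 0 < s → 0 < L s)
    (hcontrol : ∀ K : Set ℝ, IsCompact K → K ⊆ Ioi 0 →
      ∃ c : ℝ, 0 < c ∧ ∀ lam : ℝ, 0 < lam → ∀ s ∈ K, c ≤ L (lam * s) / L lam)
    (p : ℝ) (hp : 1 < p) :
    ∃ a₀ : ℝ, 0 < a₀ ∧ ∃ q : ℝ, 1 < q ∧ ∃ c : ℝ, 0 < c ∧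
      ∀ a ∈ Ioc (0 : ℝ) a₀,
        ∀ s : ℝ, 1 ≤ s → ∀ lam : ℝ, 0 < lam →
          c * s ^ q * (lam ^ p * L lam ^ a) ≤ (s * lam) ^ p * L (s * lam) ^ a := by
  obtain ⟨c₀, hc₀, hc⟩ := hcontrol (Icc 1 2) isCompact_Icc
    (fun x hx => lt_of_lt_of_le one_pos hx.1)
  have hc₀1 : c₀ ≤ 1 := by
    have h := hc 1 one_pos 1 ⟨le_refl 1, one_le_two⟩
    rwa [mul_one, div_self (ne_of_gt (hL_pos 1 one_pos))] at h
  have hstep : ∀ lam : ℝ, 0 < lam → ∀ t ∈ Icc (1:ℝ) 2, c₀ * L lam ≤ L (lam * t) :=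
    fun lam hlam t ht => (le_div_iff₀ (hL_pos lam hlam)).mp (hc lam hlam t ht)
  have key : ∀ n : ℕ, ∀ lam : ℝ, 0 < lam → c₀ ^ n * L lam ≤ L (lam * 2 ^ n) := by
    intro n
    induction n with
    | zero => intro lam hlam; simp
    | succ n ih =>
      intro lam hlam
      have h1 := ih lam hlam
      have h2 := hstep (lam * 2 ^ n) (by positivity) 2 ⟨one_le_two, le_refl 2⟩
      calc c₀ ^ (n + 1) * L lam = c₀ * (c₀ ^ n * L lam) := by ring
        _ ≤ c₀ * L (lam * 2 ^ n) := mul_le_mul_of_nonneg_left h1 hc₀.le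
        _ ≤ L (lam * 2 ^ n * 2) := h2
        _ = L (lam * 2 ^ (n + 1)) := by ring_nf
  set β : ℝ := Real.log c₀ / Real.log 2 with hβdef
  have hlogc₀ : Real.log c₀ ≤ 0 := Real.log_nonpos hc₀.le hc₀1
  have hβ : β ≤ 0 := div_nonpos_of_nonpos_of_nonneg hlogc₀ (Real.log_nonneg one_le_two)
  set q : ℝ := (p + 1) / 2 with hqdef
  have hq1 : 1 < q := by rw [hqdef]; linarith
  have hqp : q < p := by rw [hqdef]; linarith
  have hβ1 : (0:ℝ) < 1 - β := by linarith
  refine ⟨min 1 ((p - q) / (1 - β)), lt_min one_pos (div_pos (by linarith) hβ1), q, hq1, c₀, hc₀, ?_⟩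
  rintro a ⟨ha0, ha1⟩ s hs lam hlam
  have hs0 : (0:ℝ) < s := lt_of_lt_of_le one_pos hs
  have haa : a ≤ 1 := ha1.trans (min_le_left _ _)
  set n : ℕ := ⌊Real.logb 2 s⌋₊ with hn
  have ht0 : (0:ℝ) ≤ Real.logb 2 s := Real.logb_nonneg one_lt_two hs
  have hn1 : (n : ℝ) ≤ Real.logb 2 s := Nat.floor_le ht0
  have hn2 : Real.logb 2 s < n + 1 := Nat.lt_floor_add_one _
  have h2n : (2:ℝ) ^ n ≤ s := by
    have h := Real.rpow_le_rpow_of_exponent_le one_le_two hn1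
    rwa [Real.rpow_natCast, Real.rpow_logb two_pos (by norm_num) hs0] at h
  have hs2n : s ≤ 2 * 2 ^ n := by
    have h := Real.rpow_le_rpow_of_exponent_le one_le_two hn2.le
    rw [Real.rpow_logb two_pos (by norm_num) hs0,
      show ((n:ℝ) + 1) = ((n + 1 : ℕ) : ℝ) by push_cast; ring,
      Real.rpow_natCast, pow_succ] at h
    linarith
  have h2npos : (0:ℝ) < 2 ^ n := by positivity
  have ht : s / 2 ^ n ∈ Icc (1:ℝ) 2 :=
    ⟨(le_div_iff₀ h2npos).mpr (by linarith), (div_le_iff₀ h2npos).mpr (by linarith)⟩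
  have hL1 : c₀ ^ (n + 1) * L lam ≤ L (s * lam) := by
    have h1 := key n lam hlam
    have h2 := hstep (lam * 2 ^ n) (by positivity) (s / 2 ^ n) ht
    have heq : lam * 2 ^ n * (s / 2 ^ n) = s * lam := by field_simp
    calc c₀ ^ (n + 1) * L lam = c₀ * (c₀ ^ n * L lam) := by ring
      _ ≤ c₀ * L (lam * 2 ^ n) := mul_le_mul_of_nonneg_left h1 hc₀.le
      _ ≤ L (lam * 2 ^ n * (s / 2 ^ n)) := h2
      _ = L (s * lam) := by rw [heq]
  have hLlam := hL_pos lam hlam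
  have hrpow : (c₀ ^ (n + 1) * L lam) ^ a ≤ L (s * lam) ^ a :=
    Real.rpow_le_rpow (by positivity) hL1 ha0.le
  have hmul : (c₀ ^ (n + 1) * L lam) ^ a = (c₀ ^ (n + 1)) ^ a * L lam ^ a :=
    Real.mul_rpow (by positivity) hLlam.le
  -- lower bound for (c₀^(n+1))^a
  have hlow : c₀ * s ^ (a * β) ≤ (c₀ ^ (n + 1)) ^ a := by
    have e1 : (c₀ ^ (n + 1) : ℝ) ^ a = Real.exp (((n:ℝ) + 1) * Real.log c₀ * a) := by
      rw [Real.rpow_def_of_pos (by positivity), Real.log_pow]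
      push_cast; ring_nf
    have e2 : s ^ (a * β) = Real.exp (Real.log s * (a * β)) :=
      Real.rpow_def_of_pos hs0 _
    have e3 : c₀ = Real.exp (Real.log c₀) := (Real.exp_log hc₀).symm
    rw [e1, e2]; nth_rewrite 1 [e3]
    rw [← Real.exp_add]
    apply Real.exp_le_exp.mpr
    have hlogs : Real.log s = Real.logb 2 s * Real.log 2 := by
      rw [Real.logb]; field_simp
    rw [hlogs, hβdef]
    have hlog2 : (0:ℝ) < Real.log 2 := Real.log_pos one_lt_two
    have key1 : (1 - a) * (-Real.log c₀) ≥ 0 :=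
      mul_nonneg (by linarith) (by linarith)
    have key2 : a * (Real.logb 2 s - n) * (-Real.log c₀) ≥ 0 :=
      mul_nonneg (mul_nonneg ha0.le (by linarith)) (by linarith)
    have hfs : Real.logb 2 s * Real.log 2 * (a * (Real.log c₀ / Real.log 2))
        = Real.logb 2 s * a * Real.log c₀ := by field_simp
    rw [hfs]
    nlinarith [key1, key2]
  have hqle : q ≤ p + a * β := by
    have hA : a ≤ (p - q) / (1 - β) := ha1.trans (min_le_right _ _)
    have hA' : a * (1 - β) ≤ p - q := (le_div_iff₀ hβ1).mp hA
    nlinarith [ha0]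
  have hsq : s ^ q ≤ s ^ p * s ^ (a * β) := by
    rw [← Real.rpow_add hs0]
    exact Real.rpow_le_rpow_of_exponent_le hs hqle
  have hLa : c₀ * s ^ (a * β) * L lam ^ a ≤ L (s * lam) ^ a := by
    calc c₀ * s ^ (a * β) * L lam ^ a ≤ (c₀ ^ (n + 1)) ^ a * L lam ^ a :=
          mul_le_mul_of_nonneg_right hlow (Real.rpow_nonneg hLlam.le a)
      _ = (c₀ ^ (n + 1) * L lam) ^ a := hmul.symm
      _ ≤ L (s * lam) ^ a := hrpow
  have hsl : (s * lam) ^ p = s ^ p * lam ^ p := Real.mul_rpow hs0.le hlam.le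
  calc c₀ * s ^ q * (lam ^ p * L lam ^ a)
      ≤ c₀ * (s ^ p * s ^ (a * β)) * (lam ^ p * L lam ^ a) := by
        gcongr c₀ * ?_ * (lam ^ p * L lam ^ a)
    _ = s ^ p * lam ^ p * (c₀ * s ^ (a * β) * L lam ^ a) := by ring
    _ ≤ s ^ p * lam ^ p * (L (s * lam) ^ a) := by
        apply mul_le_mul_of_nonneg_left hLa (by positivity)
    _ = (s * lam) ^ p * L (s * lam) ^ a := by rw [hsl]
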